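/- Let κ be a cardinal and λ a cardinal such that κ has the polarized partition property for λ: for every function c from the finite subsets of κ into λ there exists an infinite block sequence (s_i)_{i<ω} of 2-element subsets of κ (i.e., max s_i < min s_{i+1} for all i) such that for every n ∈ ℕ the value c({x_0, …, x_{n−1}}) is the same for all choices x_0 ∈ s_0, …, x_{n−1} ∈ s_{n−1}. Then for every n ∈ ℕ the chromatic number of the positional graph G_n(κ) is greater than λ: for every c : [κ]^{<ω} → λ there are distinct finite subsets s, t of κ with c(s) = c(t) that are not in n-Δ-position. -/

import Mathlib

/-- `s < t` for finite sets of ordinals. -/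
def BlkLt (s t : Finset Ordinal) : Prop := ∀ a ∈ s, ∀ b ∈ t, a < b

/-- `s ⊑ t` : `s` is an initial part of `t`. -/
def InitSeg (s t : Finset Ordinal) : Prop := s ⊆ t ∧ BlkLt s (t \ s)

/-- `A` and `B` are in `n`-Δ-position. -/
def DeltaPos (n : ℕ) (A B : Finset Ordinal) : Prop :=
  ∃ I J : Finset Ordinal, I ⊆ A ∩ B ∧ J ⊆ A ∩ B ∧ BlkLt I J ∧
    A ∩ B = I ∪ J ∧ J.card ≤ n ∧ InitSeg I A ∧ InitSeg I B

/-- If `κ` has the polarized partition property for `λ` many colors, then for every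
`n` the chromatic number of the positional graph `G_n(κ)` is greater than `λ`. -/
theorem stmt1 (κ lam : Cardinal)
    (hpol : ∀ c : Finset Ordinal → lam.out,
      ∃ s : ℕ → Finset Ordinal,
        (∀ i, (s i).card = 2) ∧
        (∀ i, ∀ a ∈ s i, a < κ.ord) ∧
        (∀ i, BlkLt (s i) (s (i + 1))) ∧
        (∀ m : ℕ, ∀ x y : ℕ → Ordinal,
          (∀ i < m, x i ∈ s i) → (∀ i < m, y i ∈ s i) →
          c ((Finset.range m).image x) = c ((Finset.range m).image y)))
    (n : ℕ) (c : Finset Ordinal → lam.out) :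
    ∃ s t : Finset Ordinal,
      (∀ a ∈ s, a < κ.ord) ∧ (∀ a ∈ t, a < κ.ord) ∧
      s ≠ t ∧ c s = c t ∧ ¬ DeltaPos n s t := by
  obtain ⟨s, hcard, hlt, hblk, hhom⟩ := hpol c
  have hne : ∀ i, (s i).Nonempty := fun i => Finset.card_pos.mp (by rw [hcard i]; norm_num)
  set x : ℕ → Ordinal := fun i => (s i).min' (hne i) with hxdef
  set y : ℕ → Ordinal := fun i => if i = 0 then (s i).max' (hne i) else (s i).min' (hne i)
    with hydef
  have hxmem : ∀ i, x i ∈ s i := fun i => Finset.min'_mem _ _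
  have hymem : ∀ i, y i ∈ s i := by
    intro i
    by_cases h : i = 0 <;> simp [hydef, h, Finset.max'_mem, Finset.min'_mem]
  have hmono : ∀ i j, i < j → ∀ a ∈ s i, ∀ b ∈ s j, a < b := by
    intro i j hij
    induction j with
    | zero => omega
    | succ j ih =>
      intro a ha b hb
      rcases Nat.lt_succ_iff_lt_or_eq.mp hij with h | h
      · obtain ⟨e, he⟩ := hne j
        exact (ih h a ha e he).trans (hblk j e he b hb)
      · subst h; exact hblk i a ha b hb
  have hxmono : ∀ i j, i < j → x i < x j := fun i j hij =>
    hmono i j hij _ (hxmem i) _ (hxmem j)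
  set m := n + 2 with hm
  set A := (Finset.range m).image x with hA
  set B := (Finset.range m).image y with hB
  have hx0y0 : x 0 < y 0 := by
    simp only [hydef, if_pos rfl]
    exact Finset.min'_lt_max'_of_card _ (by rw [hcard 0]; norm_num)
  have hyx : ∀ i, i ≠ 0 → y i = x i := by intro i h; simp [hydef, hxdef, h]
  -- x 0 is not in B
  have hx0B : x 0 ∉ B := by
    simp only [hB, Finset.mem_image, Finset.mem_range]
    rintro ⟨j, hj, hje⟩
    by_cases h : j = 0
    · subst h; exact absurd hje (ne_of_gt hx0y0)
    · have : x 0 < y j := hmono 0 j (Nat.pos_of_ne_zero h) _ (hxmem 0) _ (hymem j)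
      exact absurd hje (ne_of_gt this)
  -- y 0 is not in A
  have hy0A : y 0 ∉ A := by
    simp only [hA, Finset.mem_image, Finset.mem_range]
    rintro ⟨j, hj, hje⟩
    by_cases h : j = 0
    · subst h; exact absurd hje (ne_of_lt hx0y0)
    · have : y 0 < x j := hmono 0 j (Nat.pos_of_ne_zero h) _ (hymem 0) _ (hxmem j)
      exact absurd hje (ne_of_gt this)
  -- the intersection
  have hinter : A ∩ B = (Finset.Ico 1 m).image x := by
    ext a
    simp only [Finset.mem_inter, hA, hB, Finset.mem_image, Finset.mem_range, Finset.mem_Ico]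
    constructor
    · rintro ⟨⟨i, hi, rfl⟩, hb⟩
      by_cases h : i = 0
      · subst h
        exact absurd (by simpa [hB, Finset.mem_image] using hb) hx0B
      · exact ⟨i, ⟨Nat.pos_of_ne_zero h, hi⟩, rfl⟩
    · rintro ⟨i, ⟨hi1, hi⟩, rfl⟩
      refine ⟨⟨i, hi, rfl⟩, ⟨i, hi, ?_⟩⟩
      exact hyx i (by omega)
  have hintercard : (A ∩ B).card = n + 1 := by
    rw [hinter, Finset.card_image_of_injOn, Nat.card_Ico]
    · omega
    · intro i hi j hj hij
      by_contra h
      rcases Nat.lt_or_ge i j with h' | h'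
      · exact absurd hij (ne_of_lt (hxmono i j h'))
      · exact absurd hij (ne_of_gt (hxmono j i (lt_of_le_of_ne h' (Ne.symm h))))
  refine ⟨A, B, ?_, ?_, ?_, ?_, ?_⟩
  · intro a ha
    simp only [hA, Finset.mem_image, Finset.mem_range] at ha
    obtain ⟨i, _, rfl⟩ := ha
    exact hlt i _ (hxmem i)
  · intro a ha
    simp only [hB, Finset.mem_image, Finset.mem_range] at ha
    obtain ⟨i, _, rfl⟩ := ha
    exact hlt i _ (hymem i)
  · intro hAB
    exact hy0A (hAB ▸ (Finset.mem_image.mpr ⟨0, Finset.mem_range.mpr (by omega), rfl⟩))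
  · exact hhom m x y (fun i _ => hxmem i) (fun i _ => hymem i)
  · rintro ⟨I, J, hIsub, hJsub, _, hunion, hJcard, ⟨hIA, hIlt⟩, _⟩
    rcases I.eq_empty_or_nonempty with hI | ⟨z, hz⟩
    · have : (A ∩ B).card ≤ n := by
        calc (A ∩ B).card = (I ∪ J).card := by rw [hunion]
        _ ≤ J.card := by rw [hI, Finset.empty_union]
        _ ≤ n := hJcard
      omega
    · have hzAB : z ∈ A ∩ B := hIsub hz
      rw [hinter] at hzAB
      obtain ⟨i, hi, rfl⟩ := Finset.mem_image.mp hzAB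
      rw [Finset.mem_Ico] at hi
      have hx0A : x 0 ∈ A := Finset.mem_image.mpr ⟨0, Finset.mem_range.mpr (by omega), rfl⟩
      have hx0I : x 0 ∉ I := by
        intro h
        exact hx0B (Finset.mem_inter.mp (hIsub h)).2
      have := hIlt _ hz (x 0) (Finset.mem_sdiff.mpr ⟨hx0A, hx0I⟩)
      exact absurd this (not_lt.mpr (le_of_lt (hxmono 0 i hi.1)))
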